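/- Let Z be a real normed linear space and let K₁, K₂ ⊆ Z be nonempty cones (i.e., t·z ∈ Kᵢ whenever z ∈ Kᵢ and t > 0), and let ε ∈ (0,1). If vectors z₁, z₂ ∈ Z satisfy ‖z₁‖ + ‖z₂‖ = 1, ‖z₁ + z₂‖ < ε, z₁ ∈ K₁ and z₂ ∈ K₂, then there exist vectors ẑ₁, ẑ₂ ∈ Z such that ‖ẑ₁‖ + ‖ẑ₂‖ = 1, ẑ₁ + ẑ₂ = 0, d(ẑ₁, K₁) < ε/(2(1−ε)) and d(ẑ₂, K₂) < ε/(2(1−ε)). -/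

import Mathlib

/-- Lemma 1(i): conversion from near-normal pairs with small sum to exactly opposite
pairs near the cones. -/
theorem stmt_0 {Z : Type*} [NormedAddCommGroup Z] [NormedSpace ℝ Z]
    (K₁ K₂ : Set Z) (hK₁ : K₁.Nonempty) (hK₂ : K₂.Nonempty)
    (hcone₁ : ∀ z ∈ K₁, ∀ t : ℝ, 0 < t → t • z ∈ K₁)
    (hcone₂ : ∀ z ∈ K₂, ∀ t : ℝ, 0 < t → t • z ∈ K₂)
    (ε : ℝ) (hε0 : 0 < ε) (hε1 : ε < 1)
    (z₁ z₂ : Z) (hnorm : ‖z₁‖ + ‖z₂‖ = 1) (hsum : ‖z₁ + z₂‖ < ε)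
    (hz₁ : z₁ ∈ K₁) (hz₂ : z₂ ∈ K₂) :
    ∃ w₁ w₂ : Z, ‖w₁‖ + ‖w₂‖ = 1 ∧ w₁ + w₂ = 0 ∧
      Metric.infDist w₁ K₁ < ε / (2 * (1 - ε)) ∧
      Metric.infDist w₂ K₂ < ε / (2 * (1 - ε)) := by
  set v := z₁ - z₂ with hv
  have e1 : (z₁ + z₂) + (z₁ - z₂) = (2:ℝ) • z₁ := by
    rw [two_smul]; abel
  have e2 : (z₁ + z₂) - (z₁ - z₂) = (2:ℝ) • z₂ := by
    rw [two_smul]; abel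
  have t1 : (2:ℝ) * ‖z₁‖ ≤ ‖z₁ + z₂‖ + ‖v‖ := by
    calc (2:ℝ) * ‖z₁‖ = ‖(2:ℝ) • z₁‖ := by rw [norm_smul]; simp
    _ = ‖(z₁ + z₂) + (z₁ - z₂)‖ := by rw [e1]
    _ ≤ ‖z₁ + z₂‖ + ‖z₁ - z₂‖ := norm_add_le _ _
  have t2 : (2:ℝ) * ‖z₂‖ ≤ ‖z₁ + z₂‖ + ‖v‖ := by
    calc (2:ℝ) * ‖z₂‖ = ‖(2:ℝ) • z₂‖ := by rw [norm_smul]; simp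
    _ = ‖(z₁ + z₂) - (z₁ - z₂)‖ := by rw [e2]
    _ ≤ ‖z₁ + z₂‖ + ‖z₁ - z₂‖ := norm_sub_le _ _
  have hvlb : 1 - ε < ‖v‖ := by linarith
  have hvpos : (0:ℝ) < ‖v‖ := by linarith
  set c : ℝ := (2 * ‖v‖)⁻¹ with hc
  have hcpos : 0 < c := by positivity
  refine ⟨c • v, -(c • v), ?_, by abel, ?_, ?_⟩
  · rw [norm_neg, norm_smul, Real.norm_eq_abs, abs_of_pos hcpos, hc]
    field_simp
    ring
  · have hmem : (‖v‖)⁻¹ • z₁ ∈ K₁ := hcone₁ z₁ hz₁ _ (by positivity)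
    refine lt_of_le_of_lt (Metric.infDist_le_dist_of_mem hmem) ?_
    have : c • v - (‖v‖)⁻¹ • z₁ = ((2 * ‖v‖)⁻¹) • (-(z₁ + z₂)) := by
      rw [hc, hv]
      have hn : ‖z₁ - z₂‖ ≠ 0 := hvpos.ne'
      match_scalars <;> field_simp <;> ring
    rw [dist_eq_norm, this, norm_smul, Real.norm_eq_abs, abs_of_pos (hc ▸ hcpos),
      norm_neg]
    rw [inv_mul_eq_div, div_lt_div_iff₀ (by linarith) (by linarith)]
    nlinarith [norm_nonneg (z₁ + z₂)]
  · have hmem : (‖v‖)⁻¹ • z₂ ∈ K₂ := hcone₂ z₂ hz₂ _ (by positivity)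
    refine lt_of_le_of_lt (Metric.infDist_le_dist_of_mem hmem) ?_
    have : -(c • v) - (‖v‖)⁻¹ • z₂ = ((2 * ‖v‖)⁻¹) • (-(z₁ + z₂)) := by
      rw [hc, hv]
      have hn : ‖z₁ - z₂‖ ≠ 0 := hvpos.ne'
      match_scalars <;> field_simp <;> ring
    rw [dist_eq_norm, this, norm_smul, Real.norm_eq_abs, abs_of_pos (hc ▸ hcpos),
      norm_neg]
    rw [inv_mul_eq_div, div_lt_div_iff₀ (by linarith) (by linarith)]
    nlinarith [norm_nonneg (z₁ + z₂)]
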